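/- Let k be an algebraically closed field of characteristic p ≥ 3. For t ∈ k \ {0,1} write J(t) = 256·(t² − t + 1)³ / (t²·(t−1)²), and for admissible (ν, μ, λ) write λ' = (μλ−1)(μ−ν) / ((μλ−ν)(μ−1)). Then for any j1, j2, j3 ∈ k, the set of triples (ν, μ, λ) ∈ k³ with ν ∉ {0, 1}, μ ∉ {0, 1, ν}, λ ∉ {0, 1, μ⁻¹, ν·μ⁻¹}, such that the multiset {J(ν), J(λ), J(λ')} equals the multiset {j1, j2, j3}, is finite and has at most 2592 elements. -/
import Mathlib

open Polynomial

/-- The `j`-invariant of the Legendre elliptic curve `y² = x(x−1)(x−t)`. -/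
noncomputable def legendreJ {k : Type*} [Field k] (t : k) : k :=
  256 * (t ^ 2 - t + 1) ^ 3 / (t ^ 2 * (t - 1) ^ 2)

/-- The Legendre parameter of the third quotient genus-1 curve
`E_{ν,μ,λ} : y² = (x−1)(x−ν)(x−μ)(x−μλ)`. -/
noncomputable def lamPrime {k : Type*} [Field k] (nu mu lam : k) : k :=
  (mu * lam - 1) * (mu - nu) / ((mu * lam - nu) * (mu - 1))

lemma ms2 {k : Type*} (b c x y : k) (h : ({b,c} : Multiset k) = {x,y}) :
    (b=x∧c=y)∨(b=y∧c=x) := by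
  have hb : b ∈ ({x,y} : Multiset k) := by rw [← h]; simp
  simp only [Multiset.insert_eq_cons, Multiset.mem_cons, Multiset.mem_singleton] at hb
  simp only [Multiset.insert_eq_cons] at h
  obtain hb|hb := hb
  · subst hb
    rw [Multiset.cons_inj_right, Multiset.singleton_inj] at h
    exact Or.inl ⟨rfl, h⟩
  · subst hb
    rw [show (x ::ₘ {b} : Multiset k) = b ::ₘ {x} from Multiset.pair_comm x b,
      Multiset.cons_inj_right, Multiset.singleton_inj] at h
    exact Or.inr ⟨rfl, h⟩

lemma ms3 {k : Type*} (a b c x y z : k) (h : ({a,b,c} : Multiset k) = {x,y,z}) :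
    (a=x∧b=y∧c=z) ∨ (a=x∧b=z∧c=y) ∨ (a=y∧b=x∧c=z)
    ∨ (a=y∧b=z∧c=x) ∨ (a=z∧b=x∧c=y) ∨ (a=z∧b=y∧c=x) := by
  have ha : a ∈ ({x,y,z} : Multiset k) := by rw [← h]; simp
  simp only [Multiset.insert_eq_cons, Multiset.mem_cons, Multiset.mem_singleton] at ha
  simp only [Multiset.insert_eq_cons] at h
  obtain ha|ha|ha := ha
  · subst ha
    rw [Multiset.cons_inj_right] at h
    obtain h|h := ms2 _ _ _ _ (by simpa [Multiset.insert_eq_cons] using h) <;> tauto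
  · subst ha
    rw [Multiset.cons_swap x, Multiset.cons_inj_right] at h
    obtain h|h := ms2 _ _ _ _ (by simpa [Multiset.insert_eq_cons] using h) <;> tauto
  · subst ha
    rw [show (x ::ₘ y ::ₘ {a} : Multiset k) = a ::ₘ x ::ₘ {y} by
      rw [show (y ::ₘ {a} : Multiset k) = a ::ₘ {y} from Multiset.pair_comm y a,
        Multiset.cons_swap], Multiset.cons_inj_right] at h
    obtain h|h := ms2 _ _ _ _ (by simpa [Multiset.insert_eq_cons] using h) <;> tauto

noncomputable def legPoly {k : Type*} [Field k] (j : k) : Polynomial k :=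
  256*(X^2 - X + 1)^3 - C j * (X^2*(X-1)^2)

lemma legPoly_natDegree {k : Type*} [Field k] (h2 : (2:k) ≠ 0) (j : k) :
    (legPoly j).natDegree = 6 := by
  have h256 : (256:k) ≠ 0 := by
    have := pow_ne_zero 8 h2; norm_num at this; exact_mod_cast this
  unfold legPoly
  compute_degree!

lemma legPoly_ne_zero {k : Type*} [Field k] (h2 : (2:k) ≠ 0) (j : k) :
    legPoly j ≠ 0 := by
  intro h0
  have := legPoly_natDegree h2 j
  rw [h0] at this
  simp at this

noncomputable def legRoots {k : Type*} [Field k] [DecidableEq k] (j : k) : Finset k :=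
  (legPoly j).roots.toFinset

lemma legRoots_card {k : Type*} [Field k] [DecidableEq k] (h2 : (2:k) ≠ 0) (j : k) :
    (legRoots j).card ≤ 6 := by
  calc (legRoots j).card ≤ Multiset.card (legPoly j).roots := Multiset.toFinset_card_le _
    _ ≤ (legPoly j).natDegree := (legPoly j).card_roots'
    _ = 6 := legPoly_natDegree h2 j

lemma mem_legRoots {k : Type*} [Field k] [DecidableEq k] (h2 : (2:k) ≠ 0) {j t : k}
    (h0 : t ≠ 0) (h1 : t ≠ 1) (hj : legendreJ t = j) : t ∈ legRoots j := by
  rw [legRoots, Multiset.mem_toFinset, mem_roots (legPoly_ne_zero h2 j)]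
  have hden : (t ^ 2 * (t - 1) ^ 2) ≠ 0 :=
    mul_ne_zero (pow_ne_zero _ h0) (pow_ne_zero _ (sub_ne_zero.2 h1))
  rw [legendreJ, div_eq_iff hden] at hj
  simp only [IsRoot, legPoly, eval_sub, eval_mul, eval_add, eval_pow, eval_ofNat,
    eval_C, eval_X, eval_one]
  linear_combination hj

noncomputable def quadPoly {k : Type*} [Field k] (nu lam c : k) : Polynomial k :=
  C (lam*(1-c))*X^2 + C (c*(lam+nu) - lam*nu - 1)*X + C (nu*(1-c))

lemma quadPoly_natDegree {k : Type*} [Field k] {nu lam c : k} (hl : lam ≠ 0) (hc : c ≠ 1) :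
    (quadPoly nu lam c).natDegree = 2 := by
  unfold quadPoly
  compute_degree!
  exact ⟨hl, sub_ne_zero.2 (Ne.symm hc)⟩

lemma quadPoly_ne_zero {k : Type*} [Field k] {nu lam c : k} (hl : lam ≠ 0) (hc : c ≠ 1) :
    quadPoly nu lam c ≠ 0 := by
  intro h0
  have := quadPoly_natDegree (nu := nu) hl hc
  rw [h0] at this
  simp at this

noncomputable def quadRoots {k : Type*} [Field k] [DecidableEq k] (nu lam c : k) : Finset k :=
  (quadPoly nu lam c).roots.toFinset

lemma quadRoots_card {k : Type*} [Field k] [DecidableEq k] {nu lam c : k} (hl : lam ≠ 0) (hc : c ≠ 1) :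
    (quadRoots nu lam c).card ≤ 2 := by
  calc (quadRoots nu lam c).card ≤ Multiset.card (quadPoly nu lam c).roots :=
        Multiset.toFinset_card_le _
    _ ≤ (quadPoly nu lam c).natDegree := (quadPoly nu lam c).card_roots'
    _ = 2 := quadPoly_natDegree hl hc

lemma mem_quadRoots {k : Type*} [Field k] [DecidableEq k] {nu mu lam : k} (hl : lam ≠ 0)
    (hden : (mu * lam - nu) * (mu - 1) ≠ 0)
    (hc1 : lamPrime nu mu lam ≠ 1) :
    mu ∈ quadRoots nu lam (lamPrime nu mu lam) := by
  set c := lamPrime nu mu lam with hc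
  have hrel : (mu * lam - 1) * (mu - nu) = c * ((mu * lam - nu) * (mu - 1)) :=
    (div_eq_iff hden).mp hc.symm
  rw [quadRoots, Multiset.mem_toFinset, mem_roots (quadPoly_ne_zero hl hc1)]
  simp only [IsRoot, quadPoly, eval_add, eval_mul, eval_pow, eval_C, eval_X]
  linear_combination hrel

lemma legRoots_ne_zero_one {k : Type*} [Field k] [DecidableEq k] (h2 : (2:k) ≠ 0)
    {j t : k} (ht : t ∈ legRoots j) : t ≠ 0 ∧ t ≠ 1 := by
  have h256 : (256:k) ≠ 0 := by
    have := pow_ne_zero 8 h2; norm_num at this; exact_mod_cast this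
  rw [legRoots, Multiset.mem_toFinset, mem_roots (legPoly_ne_zero h2 j)] at ht
  simp only [IsRoot, legPoly, eval_sub, eval_mul, eval_add, eval_pow, eval_ofNat,
    eval_C, eval_X, eval_one] at ht
  constructor
  · rintro rfl; apply h256; linear_combination ht
  · rintro rfl; apply h256; linear_combination ht

theorem howe_triples_with_given_j_invariants_finite
    {k : Type*} [Field k] [IsAlgClosed k]
    (p : ℕ) [CharP k p] (hp : 3 ≤ p)
    (j1 j2 j3 : k) :
    ({x : k × k × k |
        x.1 ∉ ({0, 1} : Set k)
        ∧ x.2.1 ∉ ({0, 1, x.1} : Set k)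
        ∧ x.2.2 ∉ ({0, 1, x.2.1⁻¹, x.1 * x.2.1⁻¹} : Set k)
        ∧ ({legendreJ x.1, legendreJ x.2.2, legendreJ (lamPrime x.1 x.2.1 x.2.2)}
            : Multiset k) = ({j1, j2, j3} : Multiset k)} : Set (k × k × k)).Finite
    ∧ ({x : k × k × k |
        x.1 ∉ ({0, 1} : Set k)
        ∧ x.2.1 ∉ ({0, 1, x.1} : Set k)
        ∧ x.2.2 ∉ ({0, 1, x.2.1⁻¹, x.1 * x.2.1⁻¹} : Set k)
        ∧ ({legendreJ x.1, legendreJ x.2.2, legendreJ (lamPrime x.1 x.2.1 x.2.2)}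
            : Multiset k) = ({j1, j2, j3} : Multiset k)} : Set (k × k × k)).ncard
      ≤ 2592 := by
  classical
  have h2 : (2:k) ≠ 0 := by
    intro h
    have h' : ((2:ℕ):k) = 0 := by exact_mod_cast h
    have := Nat.le_of_dvd (by norm_num) ((CharP.cast_eq_zero_iff k p 2).mp h')
    omega
  set P : Finset (k×k×k) :=
    {(j1,j2,j3),(j1,j3,j2),(j2,j1,j3),(j2,j3,j1),(j3,j1,j2),(j3,j2,j1)} with hPdef
  set F : Finset (k×k×k) := P.biUnion (fun abc =>
    ((legRoots abc.1) ×ˢ (legRoots abc.2.1) ×ˢ (legRoots abc.2.2)).biUnion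
      (fun w => (quadRoots w.1 w.2.1 w.2.2).image (fun m => (w.1, m, w.2.1)))) with hFdef
  have hsub : {x : k × k × k |
        x.1 ∉ ({0, 1} : Set k)
        ∧ x.2.1 ∉ ({0, 1, x.1} : Set k)
        ∧ x.2.2 ∉ ({0, 1, x.2.1⁻¹, x.1 * x.2.1⁻¹} : Set k)
        ∧ ({legendreJ x.1, legendreJ x.2.2, legendreJ (lamPrime x.1 x.2.1 x.2.2)}
            : Multiset k) = ({j1, j2, j3} : Multiset k)} ⊆ (↑F : Set (k×k×k)) := by
    rintro ⟨nu, mu, lam⟩ ⟨hA, hB, hC, hM⟩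
    simp only [Set.mem_insert_iff, Set.mem_singleton_iff, not_or] at hA hB hC
    obtain ⟨hnu0, hnu1⟩ := hA
    obtain ⟨hmu0, hmu1, hmunu⟩ := hB
    obtain ⟨hlam0, hlam1, hlammu, hlamnumu⟩ := hC
    have hml1 : mu * lam - 1 ≠ 0 := by
      refine sub_ne_zero.2 fun h => hlammu ?_
      exact eq_inv_of_mul_eq_one_right h
    have hmlnu : mu * lam - nu ≠ 0 := by
      refine sub_ne_zero.2 fun h => hlamnumu ?_
      field_simp
      linear_combination h
    have hden : (mu * lam - nu) * (mu - 1) ≠ 0 := mul_ne_zero hmlnu (sub_ne_zero.2 hmu1)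
    have hnumz : (mu * lam - 1) * (mu - nu) ≠ 0 := mul_ne_zero hml1 (sub_ne_zero.2 hmunu)
    have hlp0 : lamPrime nu mu lam ≠ 0 := div_ne_zero hnumz hden
    have hlp1 : lamPrime nu mu lam ≠ 1 := by
      rw [lamPrime]
      intro heq
      have h := (div_eq_one_iff_eq hden).mp heq
      have hz : mu * (lam - 1) * (nu - 1) = 0 := by linear_combination -h
      rcases mul_eq_zero.mp hz with hz | hz
      · rcases mul_eq_zero.mp hz with hz | hz
        · exact hmu0 hz
        · exact hlam1 (by linear_combination hz)
      · exact hnu1 (by linear_combination hz)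
    have key : ∀ a b c : k, (a,b,c) ∈ P → legendreJ nu = a → legendreJ lam = b →
        legendreJ (lamPrime nu mu lam) = c →
        ((nu, mu, lam) : k×k×k) ∈ (↑F : Set (k×k×k)) := by
      intro a b c hP ea eb ec
      simp only [hFdef, Finset.coe_biUnion, Set.mem_iUnion, Finset.mem_coe,
        Finset.mem_biUnion, Finset.mem_product, Finset.mem_image]
      exact ⟨(a,b,c), hP, (nu, lam, lamPrime nu mu lam),
        ⟨mem_legRoots h2 hnu0 hnu1 ea, mem_legRoots h2 hlam0 hlam1 eb,
         mem_legRoots h2 hlp0 hlp1 ec⟩,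
        mu, mem_quadRoots hlam0 hden hlp1, rfl⟩
    rcases ms3 _ _ _ _ _ _ hM with ⟨e1,e2,e3⟩|⟨e1,e2,e3⟩|⟨e1,e2,e3⟩|⟨e1,e2,e3⟩|⟨e1,e2,e3⟩|⟨e1,e2,e3⟩
    · exact key _ _ _ (by simp [hPdef]) e1 e2 e3
    · exact key _ _ _ (by simp [hPdef]) e1 e2 e3
    · exact key _ _ _ (by simp [hPdef]) e1 e2 e3
    · exact key _ _ _ (by simp [hPdef]) e1 e2 e3
    · exact key _ _ _ (by simp [hPdef]) e1 e2 e3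
    · exact key _ _ _ (by simp [hPdef]) e1 e2 e3
  have hcard : F.card ≤ 2592 := by
    refine Finset.card_biUnion_le.trans ?_
    refine (Finset.sum_le_card_nsmul _ _ 432 ?_).trans ?_
    · intro abc _
      refine Finset.card_biUnion_le.trans ?_
      refine (Finset.sum_le_card_nsmul _ _ 2 ?_).trans ?_
      · intro w hw
        simp only [Finset.mem_product] at hw
        refine Finset.card_image_le.trans (quadRoots_card ?_ ?_)
        · exact (legRoots_ne_zero_one h2 hw.2.1).1
        · exact (legRoots_ne_zero_one h2 hw.2.2).2
      · simp only [smul_eq_mul, Finset.card_product]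
        have h1 := legRoots_card h2 abc.1
        have h2' := legRoots_card h2 abc.2.1
        have h3 := legRoots_card h2 abc.2.2
        calc (legRoots abc.1).card * ((legRoots abc.2.1).card * (legRoots abc.2.2).card) * 2
            ≤ 6 * (6 * 6) * 2 :=
              Nat.mul_le_mul (Nat.mul_le_mul h1 (Nat.mul_le_mul h2' h3)) le_rfl
          _ = 432 := by norm_num
    · simp only [smul_eq_mul]
      have hP6 : P.card ≤ 6 := by
        refine (Finset.card_insert_le _ _).trans (Nat.succ_le_succ ?_)
        refine (Finset.card_insert_le _ _).trans (Nat.succ_le_succ ?_)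
        refine (Finset.card_insert_le _ _).trans (Nat.succ_le_succ ?_)
        refine (Finset.card_insert_le _ _).trans (Nat.succ_le_succ ?_)
        refine (Finset.card_insert_le _ _).trans (Nat.succ_le_succ ?_)
        exact le_of_eq (Finset.card_singleton _)
      calc P.card * 432 ≤ 6 * 432 := Nat.mul_le_mul_right 432 hP6
        _ = 2592 := by norm_num
  refine ⟨Set.Finite.subset F.finite_toSet hsub, ?_⟩
  calc _ ≤ (↑F : Set (k×k×k)).ncard := Set.ncard_le_ncard hsub F.finite_toSet
    _ = F.card := Set.ncard_coe_finset F
    _ ≤ 2592 := hcard
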